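/- For all natural numbers x₁, x₂, …, xₙ, the Sprague–Grundy value of the Auxiliary Nim game satisfies x₁ + (x₂ ⊕ x₃ ⊕ ⋯ ⊕ xₙ) ≤ N(x₁, x₂, …, xₙ) ≤ x₁ + x₂ + ⋯ + xₙ, where ⊕ denotes bitwise XOR. -/

import Mathlib

lemma sum_update_lt {n : ℕ} (x : Fin n → ℕ) (i : Fin n) (v : ℕ) (h : v < x i) :
    (∑ j, Function.update x i v j) < ∑ j, x j := by
  apply Finset.sum_lt_sum
  · intro j _
    rcases eq_or_ne j i with rfl | hj
    · simpa using h.le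
    · simp [Function.update_of_ne hj]
  · exact ⟨i, Finset.mem_univ i, by simpa using h⟩

/-- Sprague–Grundy value of the Auxiliary Nim game
`(*a) ⊞ ((*x 0) ⊕ ⋯ ⊕ (*x (n-1)))`, where `x : Fin n → ℕ` lists the piles
`x₂, …, xₙ` and `a` is the auxiliary pile `x₁`.  It is the mex of the
Sprague–Grundy values of the one-move successors: strictly decrease `a`,
or strictly decrease exactly one of the piles `x i`, or do both. -/
noncomputable def NAux {n : ℕ} (a : ℕ) (x : Fin n → ℕ) : ℕ :=
  sInf {m : ℕ |
    (∀ a', a' < a → NAux a' x ≠ m) ∧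
    (∀ (i : Fin n) (v : ℕ), v < x i → NAux a (Function.update x i v) ≠ m) ∧
    (∀ a', a' < a → ∀ (i : Fin n) (v : ℕ), v < x i →
      NAux a' (Function.update x i v) ≠ m)}
termination_by a + ∑ j, x j
decreasing_by
  · exact Nat.add_lt_add_right ‹_› _
  · exact Nat.add_lt_add_left (sum_update_lt x i v ‹_›) a
  · exact Nat.add_lt_add ‹_› (sum_update_lt x i v ‹_›)

/-- The bitwise XOR `x 0 ^^^ x 1 ^^^ ⋯ ^^^ x (n-1)` of the piles. -/
def xorSum {n : ℕ} (x : Fin n → ℕ) : ℕ := (List.ofFn x).foldr (· ^^^ ·) 0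

/-- The successor-avoidance set whose `sInf` defines `NAux`. -/
def NAuxSet {n : ℕ} (a : ℕ) (x : Fin n → ℕ) : Set ℕ :=
  {m : ℕ |
    (∀ a', a' < a → NAux a' x ≠ m) ∧
    (∀ (i : Fin n) (v : ℕ), v < x i → NAux a (Function.update x i v) ≠ m) ∧
    (∀ a', a' < a → ∀ (i : Fin n) (v : ℕ), v < x i →
      NAux a' (Function.update x i v) ≠ m)}

lemma NAux_eq {n : ℕ} (a : ℕ) (x : Fin n → ℕ) : NAux a x = sInf (NAuxSet a x) := by
  rw [NAux]; rfl

lemma xorSum_cons {n : ℕ} (a : ℕ) (y : Fin n → ℕ) :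
    xorSum (Fin.cons a y : Fin (n+1) → ℕ) = a ^^^ xorSum y := by
  simp [xorSum, List.ofFn_succ]

lemma xorSum_update {n : ℕ} (x : Fin n → ℕ) (i : Fin n) (v : ℕ) :
    xorSum (Function.update x i v) = xorSum x ^^^ x i ^^^ v := by
  induction n with
  | zero => exact i.elim0
  | succ n ih =>
    obtain ⟨x0, y, rfl⟩ : ∃ x0 y, x = Fin.cons x0 y :=
      ⟨x 0, Fin.tail x, (Fin.cons_self_tail x).symm⟩
    rcases Fin.eq_zero_or_eq_succ i with rfl | ⟨j, rfl⟩
    · rw [Fin.update_cons_zero, xorSum_cons, xorSum_cons, Fin.cons_zero,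
        Nat.xor_comm x0 (xorSum y), xor_cancel_right, Nat.xor_comm]
    · rw [← Fin.cons_update, xorSum_cons, ih y j, xorSum_cons, Fin.cons_succ]
      simp [Nat.xor_assoc]

lemma nim_move {n : ℕ} (x : Fin n → ℕ) (t : ℕ) (h : t < xorSum x) :
    ∃ i v, v < x i ∧ xorSum (Function.update x i v) = t := by
  induction n generalizing t with
  | zero => simp [xorSum, List.ofFn_zero] at h
  | succ n ih =>
    obtain ⟨x0, y, rfl⟩ : ∃ x0 y, x = Fin.cons x0 y :=
      ⟨x 0, Fin.tail x, (Fin.cons_self_tail x).symm⟩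
    rw [xorSum_cons] at h
    rcases Nat.lt_xor_cases h with h1 | h2
    · refine ⟨0, t ^^^ xorSum y, by simpa using h1, ?_⟩
      rw [Fin.update_cons_zero, xorSum_cons, xor_cancel_right]
    · obtain ⟨j, v, hv, hj⟩ := ih y _ h2
      refine ⟨j.succ, v, by simpa [Fin.cons_succ] using hv, ?_⟩
      rw [← Fin.cons_update, xorSum_cons, hj, Nat.xor_comm t x0, ← Nat.xor_assoc,
        Nat.xor_self, Nat.zero_xor]

lemma NAux_le {n : ℕ} (a : ℕ) (x : Fin n → ℕ) : NAux a x ≤ a + ∑ j, x j := by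
  rw [NAux_eq]
  apply Nat.sInf_le
  refine ⟨fun a' ha' h => ?_, fun i v hv h => ?_, fun a' ha' i v hv h => ?_⟩
  · have := NAux_le a' x
    omega
  · have := NAux_le a (Function.update x i v)
    have h2 := sum_update_lt x i v hv
    omega
  · have := NAux_le a' (Function.update x i v)
    have h2 := sum_update_lt x i v hv
    omega
termination_by a + ∑ j, x j
decreasing_by
  · exact Nat.add_lt_add_right ‹_› _
  · exact Nat.add_lt_add_left (sum_update_lt x i v ‹_›) a
  · exact Nat.add_lt_add ‹_› (sum_update_lt x i v ‹_›)

lemma top_mem_NAuxSet {n : ℕ} (a : ℕ) (x : Fin n → ℕ) :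
    (a + ∑ j, x j) ∈ NAuxSet a x := by
  refine ⟨fun a' ha' h => ?_, fun i v hv h => ?_, fun a' ha' i v hv h => ?_⟩
  · have := NAux_le a' x
    omega
  · have := NAux_le a (Function.update x i v)
    have h2 := sum_update_lt x i v hv
    omega
  · have := NAux_le a' (Function.update x i v)
    have h2 := sum_update_lt x i v hv
    omega

lemma NAux_zero {n : ℕ} (x : Fin n → ℕ) : NAux 0 x = xorSum x := by
  have hmem : xorSum x ∈ NAuxSet 0 x := by
    refine ⟨fun a' ha' => absurd ha' (Nat.not_lt_zero _), fun i v hv h => ?_,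
      fun a' ha' => absurd ha' (Nat.not_lt_zero _)⟩
    rw [NAux_zero (Function.update x i v), xorSum_update] at h
    have h3 := congrArg (fun z => xorSum x ^^^ z) h
    simp only [← Nat.xor_assoc, Nat.xor_self, Nat.zero_xor] at h3
    have := xor_eq_zero_iff.mp h3
    omega
  rw [NAux_eq]
  apply le_antisymm (Nat.sInf_le hmem)
  apply le_csInf ⟨_, hmem⟩
  intro b hb
  by_contra hlt
  push_neg at hlt
  obtain ⟨i, v, hv, heq⟩ := nim_move x b hlt
  exact hb.2.1 i v hv (by rw [NAux_zero (Function.update x i v), heq])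
termination_by ∑ j, x j
decreasing_by
  · exact sum_update_lt x i v ‹_›
  · exact sum_update_lt x i v ‹_›

lemma NAux_lt_succ {n : ℕ} (a : ℕ) (x : Fin n → ℕ) : NAux a x < NAux (a+1) x := by
  rw [NAux_eq (a+1)]
  have : NAux a x + 1 ≤ sInf (NAuxSet (a+1) x) := by
    apply le_csInf ⟨_, top_mem_NAuxSet (a+1) x⟩
    intro b hb
    obtain ⟨h1, h2, h3⟩ := hb
    by_contra hle
    push_neg at hle
    rcases eq_or_lt_of_le (Nat.lt_succ_iff.mp hle) with heq | hlt
    · exact h1 a (Nat.lt_succ_self a) heq.symm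
    · have hbmem : b ∈ NAuxSet a x := by
        refine ⟨fun a' ha' => h1 a' (ha'.trans (Nat.lt_succ_self a)),
          fun i v hv => h3 a (Nat.lt_succ_self a) i v hv,
          fun a' ha' => h3 a' (ha'.trans (Nat.lt_succ_self a))⟩
      have := Nat.sInf_le hbmem
      rw [← NAux_eq] at this
      omega
  omega

/-- Bounds on the Sprague–Grundy value of Auxiliary Nim:
`x₁ + (x₂ ⊕ ⋯ ⊕ xₙ) ≤ N(x₁, x₂, …, xₙ) ≤ x₁ + x₂ + ⋯ + xₙ`. -/
theorem auxNim_bounds {n : ℕ} (hn : 1 ≤ n) (x₁ : ℕ) (x : Fin n → ℕ) :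
    x₁ + xorSum x ≤ NAux x₁ x ∧ NAux x₁ x ≤ x₁ + ∑ i, x i := by
  refine ⟨?_, NAux_le x₁ x⟩
  induction x₁ with
  | zero => rw [NAux_zero]; omega
  | succ a ih =>
    have := NAux_lt_succ a x
    omega
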